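/- (Matrix Williamson) For every symmetric positive-definite matrix M ∈ M_{2n}(ℝ) there exists a symplectic matrix S (satisfying SᵀJS = J, where J is the standard symplectic matrix) such that SᵀMS = diag(D, D) where D = diag(μ_1,…,μ_n) with all μ_j > 0, and the ±iμ_j are the eigenvalues of JM. -/

import Mathlib

open Matrix Polynomial

section Helpers

variable {ι : Type*} [Fintype ι] [DecidableEq ι]

lemma charpoly_similar {R : Type*} [CommRing R] (U V A : Matrix ι ι R)
    (hUV : U * V = 1) : (U * A * V).charpoly = A.charpoly := by
  have key : charmatrix (U * A * V) = U.map C * charmatrix A * V.map C := by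
    have hmapmul : ∀ (B B' : Matrix ι ι R), (B * B').map (C : R →+* R[X]) =
        B.map C * B'.map C := fun B B' => Matrix.map_mul
    have h1 : U.map (C : R →+* R[X]) * Matrix.scalar ι (X : R[X]) * V.map C
        = Matrix.scalar ι (X : R[X]) := by
      rw [(scalar_commute (X : R[X]) (Commute.all X) (U.map C)).symm.eq, mul_assoc,
        ← hmapmul, hUV]
      simp [Matrix.scalar]
    rw [charmatrix, charmatrix, Matrix.mul_sub, Matrix.sub_mul]
    congr 1
    · exact h1.symm
    · simp only [RingHom.mapMatrix_apply]
      rw [hmapmul, hmapmul]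
  have hdet : (U.map (C : R →+* R[X])).det * (V.map C).det = 1 := by
    rw [← Matrix.det_mul, ← Matrix.map_mul, hUV]
    simp
  rw [Matrix.charpoly, Matrix.charpoly, key, Matrix.det_mul, Matrix.det_mul]
  rw [mul_comm (U.map (C : R →+* R[X])).det, mul_assoc, hdet, mul_one]

lemma charpoly_diagonal {R : Type*} [CommRing R] (d : ι → R) :
    (Matrix.diagonal d).charpoly = ∏ i, (X - C (d i)) := by
  have : charmatrix (Matrix.diagonal d) = Matrix.diagonal (fun i => (X : R[X]) - C (d i)) := by
    ext i j
    rcases eq_or_ne i j with rfl | h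
    · simp
    · simp [h, Matrix.diagonal_apply_ne _ h]
  rw [Matrix.charpoly, this, Matrix.det_diagonal]

lemma charpoly_map_ringHom {R S : Type*} [CommRing R] [CommRing S] (f : R →+* S)
    (A : Matrix ι ι R) : (A.map f).charpoly = A.charpoly.map f := by
  rw [Matrix.charpoly, Matrix.charpoly, charmatrix_map]
  exact ((mapRingHom f).map_det _).symm

end Helpers
open Matrix Polynomial

set_option linter.unusedSectionVars false

variable {m : Type*} [Fintype m] [DecidableEq m]

/-- Block matrix with four diagonal blocks. -/
def Dg {R : Type*} [CommRing R] (f g h k : m → R) : Matrix (m ⊕ m) (m ⊕ m) R :=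
  Matrix.fromBlocks (diagonal f) (diagonal g) (diagonal h) (diagonal k)

variable {R : Type*} [CommRing R]

lemma Dg_mul (f g h k f' g' h' k' : m → R) :
    Dg f g h k * Dg f' g' h' k'
      = Dg (f * f' + g * h') (f * g' + g * k') (h * f' + k * h') (h * g' + k * k') := by
  simp only [Dg, Matrix.fromBlocks_multiply, Matrix.diagonal_mul_diagonal,
    Matrix.diagonal_add]
  rfl

lemma Dg_transpose (f g h k : m → R) : (Dg f g h k)ᵀ = Dg f h g k := by
  simp [Dg, Matrix.fromBlocks_transpose]

lemma Dg_one : (Dg 1 0 0 1 : Matrix (m ⊕ m) (m ⊕ m) R) = 1 := by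
  ext i j
  rcases i with i | i <;> rcases j with j | j <;>
    simp [Dg, Matrix.one_apply, Matrix.diagonal_apply, Sum.inl.injEq, Sum.inr.injEq]

lemma Dg_neg (f g h k : m → R) : -Dg f g h k = Dg (-f) (-g) (-h) (-k) := by
  simp [Dg, Matrix.fromBlocks_neg]

lemma Dg_J : (Dg 0 1 (-1) 0 : Matrix (m ⊕ m) (m ⊕ m) R) = Matrix.fromBlocks 0 1 (-1) 0 := by
  ext i j
  rcases i with i | i <;> rcases j with j | j <;> by_cases h : i = j <;>
    simp [Dg, Matrix.one_apply, Matrix.diagonal_apply, h]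

lemma Dg_diag (f g : m → R) : Dg f 0 0 g = Matrix.diagonal (Sum.elim f g) := by
  ext i j
  rcases i with i | i <;> rcases j with j | j <;>
    simp [Dg, Matrix.diagonal_apply, Sum.inl.injEq, Sum.inr.injEq]

lemma Dg_congr {f g h k f' g' h' k' : m → R} (h1 : f = f') (h2 : g = g')
    (h3 : h = h') (h4 : k = k') : Dg f g h k = Dg f' g' h' k' := by
  rw [h1, h2, h3, h4]

lemma Dg_map {S : Type*} [CommRing S] (φ : R →+* S) (f g h k : m → R) :
    (Dg f g h k).map φ = Dg (φ ∘ f) (φ ∘ g) (φ ∘ h) (φ ∘ k) := by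
  ext i j
  rcases i with i | i <;> rcases j with j | j <;>
    simp [Dg, Matrix.diagonal_apply, apply_ite φ]

section Skew

lemma skew_normal_form (n : ℕ) (K : Matrix (Fin n ⊕ Fin n) (Fin n ⊕ Fin n) ℝ)
    (hskew : Kᵀ = -K) (hK : IsUnit K) :
    ∃ (Q : Matrix (Fin n ⊕ Fin n) (Fin n ⊕ Fin n) ℝ) (μ : Fin n → ℝ),
      Qᵀ * Q = 1 ∧ (∀ j, 0 < μ j) ∧ K * Q = Q * Dg 0 μ (-μ) 0 := by
  classical
  -- complexification
  set Kc : Matrix (Fin n ⊕ Fin n) (Fin n ⊕ Fin n) ℂ := K.map (Complex.ofRealHom : ℝ →+* ℂ) with hKc_def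
  have hKc_apply : ∀ i j, Kc i j = (K i j : ℂ) := fun i j => rfl
  have hKskew : ∀ i j, K j i = - K i j := by
    intro i j
    have := congrFun (congrFun hskew i) j
    simpa [Matrix.transpose_apply] using this
  set H : Matrix (Fin n ⊕ Fin n) (Fin n ⊕ Fin n) ℂ := Complex.I • Kc with hH_def
  have hH : H.IsHermitian := by
    show Hᴴ = H
    ext i j
    simp only [hH_def, Matrix.conjTranspose_apply, Matrix.smul_apply, hKc_apply, star_mul',
      Complex.star_def, Complex.conj_ofReal, Complex.conj_I, smul_eq_mul]
    rw [hKskew i j]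
    push_cast
    ring
  set d : (Fin n ⊕ Fin n) → ℝ := hH.eigenvalues with hd_def
  set v : (Fin n ⊕ Fin n) → ((Fin n ⊕ Fin n) → ℂ) := fun k => ⇑(hH.eigenvectorBasis k) with hv_def
  -- eigen-equation for Kc
  have heig : ∀ k i, (∑ t, (K i t : ℂ) * v k t) = (-(d k : ℂ) * Complex.I) * v k i := by
    intro k i
    have h0 := congrFun (hH.mulVec_eigenvectorBasis k) i
    have h0' : (H *ᵥ v k) i = (d k : ℂ) * v k i := by
      refine h0.trans ?_
      show (hH.eigenvalues k • (⇑(hH.eigenvectorBasis k) : (Fin n ⊕ Fin n) → ℂ)) i = _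
      simp [Complex.real_smul, hv_def, hd_def]
    have h1 : (H *ᵥ v k) i = Complex.I * ∑ t, (K i t : ℂ) * v k t := by
      simp [hH_def, Matrix.mulVec, dotProduct, hKc_apply, mul_add, Finset.mul_sum,
        mul_assoc]
    have h3 : (∑ t, (K i t : ℂ) * v k t) = -Complex.I * ((d k : ℂ) * v k i) := by
      have h2 := congrArg (fun z => -Complex.I * z) ((h1.symm.trans h0'))
      simpa only [← mul_assoc, neg_mul, Complex.I_mul_I, neg_neg, one_mul] using h2
    rw [h3]; ring
  -- orthonormality
  have horth : ∀ j l, (∑ i, (starRingEnd ℂ) (v j i) * v l i) = if j = l then 1 else 0 := by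
    intro j l
    have := (orthonormal_iff_ite.mp hH.eigenvectorBasis.orthonormal) j l
    simpa [PiLp.inner_apply, RCLike.inner_apply, hv_def, mul_comm] using this
  -- eigenvalues are nonzero
  have hdetK : K.det ≠ 0 := by
    have := (Matrix.isUnit_iff_isUnit_det K).mp hK
    exact this.ne_zero
  have hdetH : H.det ≠ 0 := by
    rw [hH_def, Matrix.det_smul]
    refine mul_ne_zero (pow_ne_zero _ Complex.I_ne_zero) ?_
    have hmd := (RingHom.map_det Complex.ofRealHom K).symm
    rw [hKc_def, show (K.map (Complex.ofRealHom : ℝ →+* ℂ))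
      = Complex.ofRealHom.mapMatrix K from rfl, hmd]
    exact Complex.ofReal_ne_zero.mpr hdetK
  have hd0 : ∀ k, d k ≠ 0 := by
    intro k hk
    apply hdetH
    rw [hH.det_eq_prod_eigenvalues]
    refine Finset.prod_eq_zero (Finset.mem_univ k) ?_
    rw [← hd_def, hk]
    simp
  -- dot product (no conjugation) of positive eigenvectors vanishes
  have hdot : ∀ j l, 0 < d j → 0 < d l → (∑ i, v j i * v l i) = 0 := by
    intro j l hj hl
    have h1 : (∑ i, v j i * (∑ t, (K i t : ℂ) * v l t))
        = (-(d l : ℂ) * Complex.I) * ∑ i, v j i * v l i := by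
      simp only [heig]
      rw [Finset.mul_sum]
      exact Finset.sum_congr rfl fun i _ => by ring
    have h2 : (∑ i, v j i * (∑ t, (K i t : ℂ) * v l t))
        = ((d j : ℂ) * Complex.I) * ∑ i, v j i * v l i := by
      have swap : (∑ i, v j i * (∑ t, (K i t : ℂ) * v l t))
          = ∑ t, (∑ i, (K i t : ℂ) * v j i) * v l t := by
        simp only [Finset.mul_sum, Finset.sum_mul]
        rw [Finset.sum_comm]
        exact Finset.sum_congr rfl fun i _ => Finset.sum_congr rfl fun t _ => by ring
      have inner : ∀ t, (∑ i, (K i t : ℂ) * v j i) = ((d j : ℂ) * Complex.I) * v j t := by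
        intro t
        have hneg : (∑ i, (K i t : ℂ) * v j i) = -∑ i, (K t i : ℂ) * v j i := by
          rw [← Finset.sum_neg_distrib]
          refine Finset.sum_congr rfl fun i _ => ?_
          rw [hKskew t i]
          push_cast
          ring
        rw [hneg, heig j t]
        ring
      rw [swap, Finset.mul_sum]
      refine Finset.sum_congr rfl fun t _ => ?_
      rw [inner t]
      ring
    have h3 := h1.symm.trans h2
    have h4 : (((d j : ℂ) + (d l : ℂ)) * Complex.I) * (∑ i, v j i * v l i) = 0 := by
      linear_combination (-1 : ℂ) * h3
    rcases mul_eq_zero.mp h4 with h | h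
    · exfalso
      rcases mul_eq_zero.mp h with h' | h'
      · have : (0:ℝ) < d j + d l := by linarith
        rw [← Complex.ofReal_add] at h'
        exact (Complex.ofReal_ne_zero.mpr this.ne') h'
      · exact Complex.I_ne_zero h'
    · exact h
  -- counting positive eigenvalues
  have hUV : (hH.eigenvectorUnitary : Matrix (Fin n ⊕ Fin n) (Fin n ⊕ Fin n) ℂ)
      * star (hH.eigenvectorUnitary : Matrix (Fin n ⊕ Fin n) (Fin n ⊕ Fin n) ℂ) = 1 :=
    (Matrix.mem_unitaryGroup_iff).mp hH.eigenvectorUnitary.2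
  have hchar1 : H.charpoly = ∏ k, (X - C ((d k : ℝ) : ℂ)) := by
    rw [hH.spectral_theorem, Unitary.conjStarAlgAut_apply, charpoly_similar _ _ _ hUV, _root_.charpoly_diagonal]
    rfl
  have hchar2 : (-H).charpoly = ∏ k, (X - C (((-(d k) : ℝ)) : ℂ)) := by
    have hneg : -H = (hH.eigenvectorUnitary : Matrix (Fin n ⊕ Fin n) (Fin n ⊕ Fin n) ℂ)
        * Matrix.diagonal (fun k => (((-(d k) : ℝ)) : ℂ))
        * star (hH.eigenvectorUnitary : Matrix (Fin n ⊕ Fin n) (Fin n ⊕ Fin n) ℂ) := by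
      conv_lhs => rw [hH.spectral_theorem]
      rw [show Matrix.diagonal (fun k => (((-(d k) : ℝ)) : ℂ))
          = -(Matrix.diagonal ((RCLike.ofReal : ℝ → ℂ) ∘ hH.eigenvalues)) by
        ext a b
        rcases eq_or_ne a b with rfl | h
        · simp [hd_def]
        · simp [Matrix.diagonal_apply_ne _ h]]
      simp only [Unitary.conjStarAlgAut_apply, Matrix.mul_neg, Matrix.neg_mul]
    rw [hneg, charpoly_similar _ _ _ hUV, _root_.charpoly_diagonal]
  have hchar3 : (-H).charpoly = ∏ k, (X - C ((d k : ℝ) : ℂ)) := by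
    have hmapH : H.map (starRingEnd ℂ) = -H := by
      ext i j
      simp only [Matrix.map_apply, hH_def, Matrix.smul_apply, hKc_apply, smul_eq_mul,
        Matrix.neg_apply, _root_.map_mul, Complex.conj_I, Complex.conj_ofReal]
      ring
    rw [← hmapH, charpoly_map_ringHom, hchar1, Polynomial.map_prod]
    refine Finset.prod_congr rfl fun k _ => ?_
    simp [Polynomial.map_sub, map_C, map_X, Complex.conj_ofReal]
  have hmultiset : (Finset.univ.val.map fun k => ((d k : ℝ) : ℂ))
      = Finset.univ.val.map (fun k => (((-(d k) : ℝ)) : ℂ)) := by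
    have e1 : ∀ f : (Fin n ⊕ Fin n) → ℂ, (∏ k, (X - C (f k)))
        = ((Finset.univ.val.map f).map (fun a => X - C a)).prod := by
      intro f
      rw [Finset.prod_eq_multiset_prod, Multiset.map_map]
      rfl
    have hpq : ((Finset.univ.val.map fun k => ((d k : ℝ) : ℂ)).map (fun a => X - C a)).prod
        = ((Finset.univ.val.map fun k => (((-(d k) : ℝ)) : ℂ)).map (fun a => X - C a)).prod := by
      rw [← e1, ← e1]
      exact hchar3.symm.trans hchar2
    have := congrArg Polynomial.roots hpq
    rwa [Polynomial.roots_multiset_prod_X_sub_C, Polynomial.roots_multiset_prod_X_sub_C] at this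
  have hposneg : (Finset.univ.filter fun k => 0 < d k).card
      = (Finset.univ.filter fun k => d k < 0).card := by
    have hcount := congrArg (Multiset.countP (fun z : ℂ => 0 < z.re)) hmultiset
    rw [Multiset.countP_map, Multiset.countP_map] at hcount
    have l1 : Multiset.filter (fun a => 0 < (((d a : ℝ) : ℂ)).re) Finset.univ.val
        = Multiset.filter (fun k => 0 < d k) Finset.univ.val := by
      apply Multiset.filter_congr
      intro k _
      simp
    have l2 : Multiset.filter (fun a => 0 < ((((-(d a) : ℝ)) : ℂ)).re) Finset.univ.val
        = Multiset.filter (fun k => d k < 0) Finset.univ.val := by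
      apply Multiset.filter_congr
      intro k _
      simp
    rw [l1, l2] at hcount
    exact hcount
  have hcard : (Finset.univ.filter fun k => 0 < d k).card = n := by
    have h1 := Finset.card_filter_add_card_filter_not
      (s := (Finset.univ : Finset (Fin n ⊕ Fin n))) (p := fun k => 0 < d k)
    have h2 : Finset.univ.filter (fun k => ¬ 0 < d k)
        = Finset.univ.filter (fun k => d k < 0) := by
      refine Finset.filter_congr fun k _ => ?_
      simp only [not_lt, eq_iff_iff]
      exact ⟨fun h => lt_of_le_of_ne h (hd0 k), le_of_lt⟩
    rw [h2, ← hposneg] at h1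
    have h3 : (Finset.univ : Finset (Fin n ⊕ Fin n)).card = n + n := by
      simp [Finset.card_univ]
    omega
  -- choose an indexing of the positive eigenvalues
  have hcardsub : Fintype.card {k : Fin n ⊕ Fin n // 0 < d k} = n := by
    rw [Fintype.card_subtype]; exact hcard
  let e : Fin n ≃ {k : Fin n ⊕ Fin n // 0 < d k} := (Fintype.equivFinOfCardEq hcardsub).symm
  set kk : Fin n → (Fin n ⊕ Fin n) := fun j => (e j).1 with hkk_def
  have hkk_inj : Function.Injective kk := fun a b hab => e.injective (Subtype.ext hab)
  have hkkpos : ∀ j, 0 < d (kk j) := fun j => (e j).2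
  set μ : Fin n → ℝ := fun j => d (kk j) with hμ_def
  have hμpos : ∀ j, 0 < μ j := fun j => hkkpos j
  set xv : Fin n → (Fin n ⊕ Fin n) → ℝ := fun j i => (v (kk j) i).re with hxv_def
  set yv : Fin n → (Fin n ⊕ Fin n) → ℝ := fun j i => (v (kk j) i).im with hyv_def
  -- real orthogonality relations
  have hsums : ∀ j l : Fin n,
      (∑ i, xv j i * xv l i) = (if j = l then 1 else 0) / 2 ∧
      (∑ i, yv j i * yv l i) = (if j = l then 1 else 0) / 2 ∧
      (∑ i, xv j i * yv l i) = 0 ∧ (∑ i, yv j i * xv l i) = 0 := by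
    intro j l
    have c1 := horth (kk j) (kk l)
    have hite : (if kk j = kk l then (1:ℂ) else 0) = if j = l then 1 else 0 := by
      by_cases h : j = l
      · simp [h]
      · rw [if_neg (fun hc => h (hkk_inj hc)), if_neg h]
    rw [hite] at c1
    have c2 := hdot (kk j) (kk l) (hkkpos j) (hkkpos l)
    have c1re : (∑ i, xv j i * xv l i) + (∑ i, yv j i * yv l i)
        = (if j = l then (1:ℝ) else 0) := by
      have hterm : ∀ i, ((starRingEnd ℂ) (v (kk j) i) * v (kk l) i).re
          = xv j i * xv l i + yv j i * yv l i := by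
        intro i
        simp only [Complex.mul_re, Complex.conj_re, Complex.conj_im, hxv_def, hyv_def]
        ring
      calc (∑ i, xv j i * xv l i) + (∑ i, yv j i * yv l i)
          = ∑ i, ((starRingEnd ℂ) (v (kk j) i) * v (kk l) i).re := by
            rw [← Finset.sum_add_distrib]
            exact Finset.sum_congr rfl fun i _ => (hterm i).symm
        _ = (if j = l then (1:ℂ) else 0).re := by rw [← Complex.re_sum, c1]
        _ = if j = l then (1:ℝ) else 0 := by by_cases h : j = l <;> simp [h]
    have c1im : (∑ i, xv j i * yv l i) - (∑ i, yv j i * xv l i) = 0 := by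
      have hterm : ∀ i, ((starRingEnd ℂ) (v (kk j) i) * v (kk l) i).im
          = xv j i * yv l i - yv j i * xv l i := by
        intro i
        simp only [Complex.mul_im, Complex.conj_re, Complex.conj_im, hxv_def, hyv_def]
        ring
      calc (∑ i, xv j i * yv l i) - (∑ i, yv j i * xv l i)
          = ∑ i, ((starRingEnd ℂ) (v (kk j) i) * v (kk l) i).im := by
            rw [← Finset.sum_sub_distrib]
            exact Finset.sum_congr rfl fun i _ => (hterm i).symm
        _ = (if j = l then (1:ℂ) else 0).im := by rw [← Complex.im_sum, c1]
        _ = 0 := by by_cases h : j = l <;> simp [h]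
    have c2re : (∑ i, xv j i * xv l i) - (∑ i, yv j i * yv l i) = 0 := by
      have hterm : ∀ i, (v (kk j) i * v (kk l) i).re
          = xv j i * xv l i - yv j i * yv l i := by
        intro i
        simp only [Complex.mul_re, hxv_def, hyv_def]
      calc (∑ i, xv j i * xv l i) - (∑ i, yv j i * yv l i)
          = ∑ i, (v (kk j) i * v (kk l) i).re := by
            rw [← Finset.sum_sub_distrib]
            exact Finset.sum_congr rfl fun i _ => (hterm i).symm
        _ = (0:ℂ).re := by rw [← Complex.re_sum, c2]
        _ = 0 := by simp
    have c2im : (∑ i, xv j i * yv l i) + (∑ i, yv j i * xv l i) = 0 := by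
      have hterm : ∀ i, (v (kk j) i * v (kk l) i).im
          = xv j i * yv l i + yv j i * xv l i := by
        intro i
        simp only [Complex.mul_im, hxv_def, hyv_def]
      calc (∑ i, xv j i * yv l i) + (∑ i, yv j i * xv l i)
          = ∑ i, (v (kk j) i * v (kk l) i).im := by
            rw [← Finset.sum_add_distrib]
            exact Finset.sum_congr rfl fun i _ => (hterm i).symm
        _ = (0:ℂ).im := by rw [← Complex.im_sum, c2]
        _ = 0 := by simp
    refine ⟨by linarith, by linarith, by linarith, by linarith⟩
  -- action of K on the real and imaginary parts
  have hKx : ∀ (j : Fin n) i, (∑ t, K i t * xv j t) = μ j * yv j i := by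
    intro j i
    have h0 := congrArg Complex.re (heig (kk j) i)
    rw [Complex.re_sum] at h0
    have hterm : ∀ t, ((K i t : ℂ) * v (kk j) t).re = K i t * xv j t := by
      intro t
      simp [Complex.re_ofReal_mul, hxv_def]
    rw [Finset.sum_congr rfl fun t _ => hterm t] at h0
    rw [h0]
    simp only [Complex.mul_re, Complex.mul_im, Complex.neg_re, Complex.neg_im,
      Complex.I_re, Complex.I_im, Complex.ofReal_re, Complex.ofReal_im, hμ_def, hyv_def]
    ring
  have hKy : ∀ (j : Fin n) i, (∑ t, K i t * yv j t) = -(μ j) * xv j i := by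
    intro j i
    have h0 := congrArg Complex.im (heig (kk j) i)
    rw [Complex.im_sum] at h0
    have hterm : ∀ t, ((K i t : ℂ) * v (kk j) t).im = K i t * yv j t := by
      intro t
      simp [Complex.im_ofReal_mul, hyv_def]
    rw [Finset.sum_congr rfl fun t _ => hterm t] at h0
    rw [h0]
    simp only [Complex.mul_re, Complex.mul_im, Complex.neg_re, Complex.neg_im,
      Complex.I_re, Complex.I_im, Complex.ofReal_re, Complex.ofReal_im, hμ_def, hxv_def]
    ring
  -- the orthogonal matrix
  set Q : Matrix (Fin n ⊕ Fin n) (Fin n ⊕ Fin n) ℝ := Matrix.of (fun i p =>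
    Sum.elim (fun j => Real.sqrt 2 * yv j i) (fun j => Real.sqrt 2 * xv j i) p) with hQ_def
  have h2 : Real.sqrt 2 * Real.sqrt 2 = 2 := Real.mul_self_sqrt (by norm_num)
  have hmul2 : ∀ (a b : ℝ), (Real.sqrt 2 * a) * (Real.sqrt 2 * b) = 2 * (a * b) := by
    intro a b
    rw [mul_mul_mul_comm, h2]
  have hQQ : Qᵀ * Q = 1 := by
    ext p q
    rw [Matrix.mul_apply]
    rcases p with j | j <;> rcases q with l | l <;>
      obtain ⟨hxx, hyy, hxy, hyx⟩ := hsums j l <;>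
      simp only [hQ_def, Matrix.transpose_apply, Matrix.of_apply, Sum.elim_inl, Sum.elim_inr,
        hmul2, ← Finset.mul_sum]
    · rw [hyy]
      by_cases h : j = l <;> simp [Matrix.one_apply, h]
    · rw [hyx]
      simp [Matrix.one_apply]
    · rw [hxy]
      simp [Matrix.one_apply]
    · rw [hxx]
      by_cases h : j = l <;> simp [Matrix.one_apply, h]
  have hKQ : K * Q = Q * Dg 0 μ (-μ) 0 := by
    ext i p
    rw [Matrix.mul_apply, Matrix.mul_apply]
    rcases p with j | j
    · have lhs : (∑ t, K i t * Q t (Sum.inl j)) = Real.sqrt 2 * (-(μ j) * xv j i) := by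
        simp only [hQ_def, Matrix.of_apply, Sum.elim_inl, mul_left_comm (K i _)]
        rw [← Finset.mul_sum, hKy]
      rw [show (∑ t, K i t * Q t (Sum.inl j))
          = ∑ t, K i t * Q t (Sum.inl j) from rfl] at lhs
      rw [lhs]
      rw [Fintype.sum_sum_type]
      simp only [hQ_def, Dg, Matrix.of_apply, Sum.elim_inl, Sum.elim_inr,
        Matrix.fromBlocks_apply₁₁, Matrix.fromBlocks_apply₂₁,
        Matrix.diagonal_apply, Pi.neg_apply, Pi.zero_apply]
      simp [Finset.sum_ite_eq', mul_ite]
      ring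
    · have lhs : (∑ t, K i t * Q t (Sum.inr j)) = Real.sqrt 2 * (μ j * yv j i) := by
        simp only [hQ_def, Matrix.of_apply, Sum.elim_inr, mul_left_comm (K i _)]
        rw [← Finset.mul_sum, hKx]
      rw [lhs]
      rw [Fintype.sum_sum_type]
      simp only [hQ_def, Dg, Matrix.of_apply, Sum.elim_inl, Sum.elim_inr,
        Matrix.fromBlocks_apply₁₂, Matrix.fromBlocks_apply₂₂,
        Matrix.diagonal_apply, Pi.neg_apply, Pi.zero_apply]
      simp [Finset.sum_ite_eq', mul_ite]
      ring
  exact ⟨Q, μ, hQQ, hμpos, hKQ⟩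

end Skew


section Main

open scoped MatrixOrder

/-- Matrix Williamson: Every symmetric positive-definite
M ∈ M_{2n}(ℝ) satisfies SᵀMS = diag(D,D) for some symplectic S, with
D = diag(μ_1,…,μ_n) positive and the ±iμ_j exactly the eigenvalues of JM
(expressed via the characteristic polynomial of JM over ℂ). -/
theorem stmt5 (n : ℕ) (M : Matrix (Fin n ⊕ Fin n) (Fin n ⊕ Fin n) ℝ)
    (hM_symm : M.IsSymm) (hM_pos : M.PosDef) :
    ∃ (S : Matrix (Fin n ⊕ Fin n) (Fin n ⊕ Fin n) ℝ) (D : Fin n → ℝ),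
      let J : Matrix (Fin n ⊕ Fin n) (Fin n ⊕ Fin n) ℝ :=
        Matrix.fromBlocks 0 1 (-1) 0
      Sᵀ * J * S = J ∧
      (∀ j, 0 < D j) ∧
      Sᵀ * M * S = Matrix.fromBlocks (Matrix.diagonal D) 0 0 (Matrix.diagonal D) ∧
      ((J * M).map (algebraMap ℝ ℂ)).charpoly
        = ∏ j : Fin n, ((X - C ((D j : ℂ) * Complex.I)) * (X + C ((D j : ℂ) * Complex.I))) := by
  classical
  set P := CFC.sqrt M with hP_def
  have hPH : P.IsHermitian := (CFC.sqrt_nonneg M).posSemidef.1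
  have hPsymm : Pᵀ = P := by
    ext i j
    have h := congrFun (congrFun hPH i) j
    simpa [Matrix.conjTranspose_apply] using h
  have hPP : P * P = M := CFC.sqrt_mul_sqrt_self M hM_pos.posSemidef.nonneg
  have hPdet : IsUnit P.det := by
    have hMdet : M.det ≠ 0 := hM_pos.det_pos.ne'
    have h2 : P.det * P.det = M.det := by rw [← Matrix.det_mul, hPP]
    have hPd : P.det ≠ 0 := fun h => hMdet (by rw [← h2, h, zero_mul])
    exact hPd.isUnit
  have hPinv : P * P⁻¹ = 1 := Matrix.mul_nonsing_inv P hPdet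
  have hPinv' : P⁻¹ * P = 1 := Matrix.nonsing_inv_mul P hPdet
  have hPinvT : (P⁻¹)ᵀ = P⁻¹ := by rw [Matrix.transpose_nonsing_inv, hPsymm]
  set Jm : Matrix (Fin n ⊕ Fin n) (Fin n ⊕ Fin n) ℝ := Matrix.fromBlocks 0 1 (-1) 0 with hJ_def
  have hJDg : Jm = Dg (0 : Fin n → ℝ) 1 (-1) 0 := Dg_J.symm
  have hJT : Jmᵀ = -Jm := by
    rw [hJDg, Dg_transpose, Dg_neg]
    norm_num
  have hJJ : Jm * Jm = -1 := by
    rw [hJDg, Dg_mul, ← Dg_one, ← neg_neg (Dg (1 : Fin n → ℝ) 0 0 1), Dg_neg]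
    congr 1 <;> funext i <;> simp
  set K : Matrix (Fin n ⊕ Fin n) (Fin n ⊕ Fin n) ℝ := P⁻¹ * Jm * P⁻¹ with hK_def
  have hKskew : Kᵀ = -K := by
    rw [hK_def, Matrix.transpose_mul, Matrix.transpose_mul, hPinvT, hJT]
    simp only [Matrix.mul_neg, Matrix.neg_mul, Matrix.mul_assoc]
  have hKunit : IsUnit K := by
    have hPu : IsUnit P⁻¹ := by
      rw [Matrix.isUnit_iff_isUnit_det]
      exact IsUnit.of_mul_eq_one _ (by rw [← Matrix.det_mul, hPinv', Matrix.det_one])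
    have hJu : IsUnit Jm := by
      rw [Matrix.isUnit_iff_isUnit_det]
      refine IsUnit.of_mul_eq_one ((-Jm).det) ?_
      rw [← Matrix.det_mul, Matrix.mul_neg, hJJ, neg_neg, Matrix.det_one]
    exact (hPu.mul hJu).mul hPu
  obtain ⟨Q, μ, hQQ, hμpos, hKQ⟩ := skew_normal_form n K hKskew hKunit
  set r : Fin n → ℝ := fun j => (Real.sqrt (μ j))⁻¹ with hr_def
  set D : Fin n → ℝ := fun j => (μ j)⁻¹ with hD_def
  have hDpos : ∀ j, 0 < D j := fun j => inv_pos.2 (hμpos j)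
  have hsqrt : ∀ j, Real.sqrt (μ j) * Real.sqrt (μ j) = μ j :=
    fun j => Real.mul_self_sqrt (hμpos j).le
  have hsqrt0 : ∀ j, Real.sqrt (μ j) ≠ 0 := fun j =>
    (Real.sqrt_pos.mpr (hμpos j)).ne'
  have hrμr : ∀ j, r j * (μ j * r j) = 1 := by
    intro j
    show (Real.sqrt (μ j))⁻¹ * (μ j * (Real.sqrt (μ j))⁻¹) = 1
    rw [← hsqrt j]
    field_simp
    rw [Real.sqrt_sq (Real.sqrt_nonneg _)]
    exact div_self (pow_ne_zero 2 (hsqrt0 j))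
  have hrμr' : ∀ j, r j * μ j * r j = 1 := fun j => by rw [mul_assoc]; exact hrμr j
  have hrr : ∀ j, r j * r j = D j := by
    intro j
    rw [hr_def, hD_def, ← mul_inv, hsqrt j]
  set Rm : Matrix (Fin n ⊕ Fin n) (Fin n ⊕ Fin n) ℝ := Dg r 0 0 r with hR_def
  have hRT : Rmᵀ = Rm := by rw [hR_def, Dg_transpose]
  set S : Matrix (Fin n ⊕ Fin n) (Fin n ⊕ Fin n) ℝ := P⁻¹ * Q * Rm with hS_def
  have hST : Sᵀ = Rm * Qᵀ * P⁻¹ := by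
    rw [hS_def, Matrix.transpose_mul, Matrix.transpose_mul, hPinvT, hRT, Matrix.mul_assoc]
  have hSJS : Sᵀ * Jm * S = Jm := by
    rw [hST, hS_def]
    have e1 : Rm * Qᵀ * P⁻¹ * Jm * (P⁻¹ * Q * Rm)
        = Rm * (Qᵀ * ((P⁻¹ * Jm * P⁻¹) * Q)) * Rm := by
      simp only [Matrix.mul_assoc]
    rw [e1, ← hK_def, hKQ, ← Matrix.mul_assoc Qᵀ Q, hQQ, Matrix.one_mul,
      hR_def, Dg_mul, Dg_mul, hJDg]
    refine Dg_congr ?_ ?_ ?_ ?_ <;> funext j <;>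
      simp only [Pi.add_apply, Pi.mul_apply, Pi.zero_apply, Pi.one_apply, Pi.neg_apply]
    · ring
    · linear_combination hrμr' j
    · linear_combination -hrμr' j
    · ring
  have hSMS : Sᵀ * M * S = Dg D 0 0 D := by
    rw [hST, hS_def]
    have e1 : Rm * Qᵀ * P⁻¹ * M * (P⁻¹ * Q * Rm)
        = Rm * (Qᵀ * ((P⁻¹ * (M * P⁻¹)) * Q)) * Rm := by
      simp only [Matrix.mul_assoc]
    have e2 : P⁻¹ * (M * P⁻¹) = 1 := by
      rw [← hPP, Matrix.mul_assoc, hPinv, Matrix.mul_one, hPinv']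
    rw [e1, e2, Matrix.one_mul, hQQ, Matrix.mul_one, hR_def, Dg_mul]
    refine Dg_congr ?_ ?_ ?_ ?_ <;> funext j <;>
      simp only [Pi.add_apply, Pi.mul_apply, Pi.zero_apply, Pi.one_apply, Pi.neg_apply]
    · linear_combination hrr j
    · ring
    · ring
    · linear_combination hrr j
  -- inverse of S
  set Sinv : Matrix (Fin n ⊕ Fin n) (Fin n ⊕ Fin n) ℝ := -(Jm * Sᵀ * Jm) with hSinv_def
  have hSinvS : Sinv * S = 1 := by
    rw [hSinv_def, Matrix.neg_mul]
    have e1 : Jm * Sᵀ * Jm * S = Jm * (Sᵀ * Jm * S) := by simp only [Matrix.mul_assoc]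
    rw [e1, hSJS, hJJ, neg_neg]
  have hSJ : Sinv * Jm = Jm * Sᵀ := by
    rw [hSinv_def, Matrix.neg_mul]
    have e1 : Jm * Sᵀ * Jm * Jm = Jm * Sᵀ * (Jm * Jm) := by simp only [Matrix.mul_assoc]
    rw [e1, hJJ, Matrix.mul_neg, Matrix.mul_one, neg_neg]
  have hsim : Sinv * (Jm * M) * S = Jm * Dg D 0 0 D := by
    calc Sinv * (Jm * M) * S = (Sinv * Jm) * (M * S) := by simp only [Matrix.mul_assoc]
      _ = Jm * (Sᵀ * M * S) := by rw [hSJ]; simp only [Matrix.mul_assoc]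
      _ = Jm * Dg D 0 0 D := by rw [hSMS]
  have hcharR : (Jm * M).charpoly = (Jm * Dg D 0 0 D).charpoly := by
    rw [← hsim, charpoly_similar Sinv S _ hSinvS]
  -- the complex charpoly computation
  set Dc : Fin n → ℂ := fun j => (D j : ℂ) with hDc_def
  have hchartarget : ((Jm * M).map (algebraMap ℝ ℂ)).charpoly
      = ∏ j : Fin n, ((X - C ((D j : ℂ) * Complex.I)) * (X + C ((D j : ℂ) * Complex.I))) := by
    rw [charpoly_map_ringHom (algebraMap ℝ ℂ) (Jm * M), hcharR,
      ← charpoly_map_ringHom (algebraMap ℝ ℂ)]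
    have hBc : (Jm * Dg D 0 0 D).map (algebraMap ℝ ℂ) = Dg 0 Dc (-Dc) 0 := by
      rw [hJDg, Dg_mul, Dg_map]
      refine Dg_congr ?_ ?_ ?_ ?_ <;> funext j <;>
        simp only [Function.comp_apply, Pi.add_apply, Pi.mul_apply, Pi.zero_apply,
          Pi.one_apply, Pi.neg_apply, hDc_def, hD_def] <;>
        simp [Complex.coe_algebraMap]
    rw [hBc]
    set T : Matrix (Fin n ⊕ Fin n) (Fin n ⊕ Fin n) ℂ :=
      Dg 1 1 (fun _ => Complex.I) (fun _ => -Complex.I) with hT_def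
    set T' : Matrix (Fin n ⊕ Fin n) (Fin n ⊕ Fin n) ℂ :=
      Dg (fun _ => 1/2) (fun _ => -Complex.I/2) (fun _ => 1/2) (fun _ => Complex.I/2)
        with hT'_def
    have hTT' : T * T' = 1 := by
      rw [hT_def, hT'_def, Dg_mul, ← Dg_one]
      refine Dg_congr ?_ ?_ ?_ ?_ <;> funext j <;>
        simp only [Pi.add_apply, Pi.mul_apply, Pi.one_apply, Pi.zero_apply]
      · norm_num
      · ring
      · ring
      · linear_combination (-1 : ℂ) * Complex.I_mul_I
    have hE : Dg 0 Dc (-Dc) 0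
        = T * Dg (fun j => Dc j * Complex.I) 0 0 (fun j => -(Dc j * Complex.I)) * T' := by
      rw [hT_def, hT'_def, Dg_mul, Dg_mul]
      refine Dg_congr ?_ ?_ ?_ ?_ <;> funext j <;>
        simp only [Pi.add_apply, Pi.mul_apply, Pi.one_apply, Pi.zero_apply, Pi.neg_apply]
      · ring
      · linear_combination (Dc j) * Complex.I_mul_I
      · linear_combination (-(Dc j)) * Complex.I_mul_I
      · ring
    rw [hE, charpoly_similar _ _ _ hTT', Dg_diag, _root_.charpoly_diagonal, Fintype.prod_sum_type]
    rw [Finset.prod_mul_distrib]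
    congr 1
    refine Finset.prod_congr rfl fun j _ => ?_
    simp only [Sum.elim_inr, hDc_def, map_neg, sub_neg_eq_add]
  refine ⟨S, D, ?_⟩
  refine ⟨hSJS, hDpos, ?_, hchartarget⟩
  rw [hSMS, Dg_diag]
  rw [show Matrix.diagonal (Sum.elim D D) = Matrix.fromBlocks (Matrix.diagonal D) 0 0 (Matrix.diagonal D) from (Matrix.fromBlocks_diagonal D D).symm]

end Main
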